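/- Suppose ν₁ is a continuous nonnegative semimartingale with ν₁(0) ∈ (0,1), ν₁(t) ≥ ν₁(0)/2 for all t (stopped version), and quadratic variation ⟨ν₁⟩(t) ≥ η t for some η > 0 on [0, D*], where D* = inf{t : ν₁(t) ≤ ν₁(0)/2}. For q > 1 define Z(t) = ν₁(t)^q exp(−(1/2)q(q−1)∫₀ᵗ ν₁(s)^{−2} d⟨ν₁⟩(s)). If on the event {D* ≤ T} one evaluates V(T) := 1 + ν₁(0)^q − Z(T), then V(T) ≥ 1 + ν₁(0)^q − (ν₁(0)/2)^q > 1; and on {D* > T}, V(T) ≥ 1 + ν₁(0)^q − exp(−(η/2)q(q−1)T) > 1 provided exp(−(η/2)(q−1)T) < ν₁(0). -/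
import Mathlib


/-- Key quantitative estimate for strong relative arbitrage when one asset has sufficient
variation. Here `ν` is the (stopped) first market weight, `A(t) = ∫₀ᵗ ν(s)⁻² d⟨ν⟩(s)`,
`D*` the first time `ν` drops to `ν(0)/2`, and
`Z(T) = ν(T)^q exp(−(1/2)q(q−1)A(T))`, `V(T) = 1 + ν(0)^q − Z(T)`. On `{D* ≤ T}` one has
`V(T) ≥ 1 + ν(0)^q − (ν(0)/2)^q > 1`; on `{D* > T}`, if `exp(−(η/2)(q−1)T) < ν(0)` then
`V(T) ≥ 1 + ν(0)^q − exp(−(η/2)q(q−1)T) > 1`. -/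
theorem stmt15 (T η q ν0 : ℝ) (hT : 0 < T) (hη : 0 < η) (hq : 1 < q)
    (ν A : ℝ → ℝ) (Dstar : ℝ)
    (hν0 : ν 0 = ν0) (hν0mem : ν0 ∈ Set.Ioo (0 : ℝ) 1)
    (hνT : ν T ∈ Set.Icc (0 : ℝ) 1)
    (hA0 : 0 ≤ A T)
    (hstop : Dstar ≤ T → ν T = ν0 / 2)
    (hAT : T < Dstar → η * T ≤ A T) :
    (Dstar ≤ T →
      1 + ν0 ^ q - ν T ^ q * Real.exp (-(1/2) * q * (q-1) * A T) ≥
        1 + ν0 ^ q - (ν0 / 2) ^ q ∧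
      1 + ν0 ^ q - (ν0 / 2) ^ q > 1) ∧
    (T < Dstar → Real.exp (-(η/2) * (q-1) * T) < ν0 →
      1 + ν0 ^ q - ν T ^ q * Real.exp (-(1/2) * q * (q-1) * A T) ≥
        1 + ν0 ^ q - Real.exp (-(η/2) * q * (q-1) * T) ∧
      1 + ν0 ^ q - Real.exp (-(η/2) * q * (q-1) * T) > 1) := by
  obtain ⟨hν0pos, hν0lt1⟩ := hν0mem
  have hq0 : (0:ℝ) < q := by linarith
  have hqq1 : 0 ≤ q * (q - 1) := by nlinarith
  constructor
  · intro hD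
    have hνT' : ν T = ν0 / 2 := hstop hD
    have hexp_le : Real.exp (-(1/2) * q * (q-1) * A T) ≤ 1 := by
      rw [Real.exp_le_one_iff]
      nlinarith
    have hbase : (0:ℝ) ≤ ν0 / 2 := by linarith
    have hZ : ν T ^ q * Real.exp (-(1/2) * q * (q-1) * A T) ≤ (ν0 / 2) ^ q := by
      rw [hνT']
      calc (ν0 / 2) ^ q * Real.exp (-(1/2) * q * (q-1) * A T)
          ≤ (ν0 / 2) ^ q * 1 :=
            mul_le_mul_of_nonneg_left hexp_le (Real.rpow_nonneg hbase q)
        _ = (ν0 / 2) ^ q := mul_one _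
    refine ⟨by linarith, ?_⟩
    have hlt : (ν0 / 2) ^ q < ν0 ^ q :=
      Real.rpow_lt_rpow hbase (by linarith) hq0
    have : (0:ℝ) < ν0 ^ q - (ν0 / 2) ^ q := by linarith
    linarith
  · intro hD hexp
    have hA : η * T ≤ A T := hAT hD
    have hν1 : ν T ^ q ≤ 1 := Real.rpow_le_one hνT.1 hνT.2 hq0.le
    have hexp_le : Real.exp (-(1/2) * q * (q-1) * A T) ≤
        Real.exp (-(η/2) * q * (q-1) * T) := by
      apply Real.exp_le_exp.mpr
      nlinarith
    have hZ : ν T ^ q * Real.exp (-(1/2) * q * (q-1) * A T) ≤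
        Real.exp (-(η/2) * q * (q-1) * T) := by
      calc ν T ^ q * Real.exp (-(1/2) * q * (q-1) * A T)
          ≤ 1 * Real.exp (-(1/2) * q * (q-1) * A T) :=
            mul_le_mul_of_nonneg_right hν1 (Real.exp_pos _).le
        _ = Real.exp (-(1/2) * q * (q-1) * A T) := one_mul _
        _ ≤ _ := hexp_le
    refine ⟨by linarith, ?_⟩
    have hrw : Real.exp (-(η/2) * q * (q-1) * T) =
        Real.exp (-(η/2) * (q-1) * T) ^ q := by
      rw [← Real.exp_log (Real.rpow_pos_of_pos (Real.exp_pos _) q),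
        Real.log_rpow (Real.exp_pos _), Real.log_exp]
      ring_nf
    have hlt : Real.exp (-(η/2) * (q-1) * T) ^ q < ν0 ^ q :=
      Real.rpow_lt_rpow (Real.exp_pos _).le hexp hq0
    rw [hrw]
    linarith
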